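/- Let ρ be an ordinal, a ∈ X, and let y : ℕ → X be a sequence satisfying d (y k) a ≥ ω^ρ · k for every k ∈ ℕ. Then for every b ∈ X such that d a b ≤ ω^ρ · μ₀ for some μ₀ ∈ ℕ, the sequence y is not ρ-limitedly distant from the constant sequence at b. (This is the abstract content of Corollary 4.4: the hypernode [y] lies outside the principal ρ-galaxy, so there is at least one ρ-galaxy different from the principal one.) -/

import Mathlib

open Filter Ordinal
open scoped Ordinal

universe u

/-- Natural (Hessenberg) addition of ordinals, as defined in Mathlib's former
`Mathlib/SetTheory/Ordinal/NaturalOps.lean` (removed from current Mathlib). -/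
noncomputable def Ordinal.nadd (a b : Ordinal.{u}) : Ordinal.{u} :=
  max (⨆ x : Set.Iio a, Order.succ (Ordinal.nadd x.1 b))
    (⨆ x : Set.Iio b, Order.succ (Ordinal.nadd a x.1))
termination_by (a, b)
decreasing_by all_goals cases x; decreasing_tactic

infixl:65 " ♯ " => Ordinal.nadd

namespace Ordinal

theorem nadd_le_iff {a b c : Ordinal.{u}} :
    a ♯ b ≤ c ↔ (∀ a' < a, a' ♯ b < c) ∧ (∀ b' < b, a ♯ b' < c) := by
  rw [Ordinal.nadd, max_le_iff, Ordinal.iSup_le_iff, Ordinal.iSup_le_iff]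
  simp only [Order.succ_le_iff, Subtype.forall, Set.mem_Iio]

theorem lt_nadd_of_lt_left {a a' b : Ordinal.{u}} (h : a' < a) : a' ♯ b < a ♯ b := by
  have := (nadd_le_iff (a := a) (b := b) (c := a ♯ b)).1 le_rfl
  exact this.1 a' h

theorem lt_nadd_of_lt_right {a b b' : Ordinal.{u}} (h : b' < b) : a ♯ b' < a ♯ b := by
  have := (nadd_le_iff (a := a) (b := b) (c := a ♯ b)).1 le_rfl
  exact this.2 b' h

theorem nadd_lt_nadd_right {b c : Ordinal.{u}} (h : b < c) (a : Ordinal.{u}) : b ♯ a < c ♯ a :=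
  lt_nadd_of_lt_left h

theorem nadd_lt_nadd_left {b c : Ordinal.{u}} (h : b < c) (a : Ordinal.{u}) : a ♯ b < a ♯ c :=
  lt_nadd_of_lt_right h

theorem nadd_le_nadd_right {b c : Ordinal.{u}} (h : b ≤ c) (a : Ordinal.{u}) : b ♯ a ≤ c ♯ a := by
  rcases h.lt_or_eq with h | rfl
  · exact (nadd_lt_nadd_right h a).le
  · exact le_rfl

theorem nadd_le_nadd_left {b c : Ordinal.{u}} (h : b ≤ c) (a : Ordinal.{u}) : a ♯ b ≤ a ♯ c := by
  rcases h.lt_or_eq with h | rfl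
  · exact (nadd_lt_nadd_left h a).le
  · exact le_rfl

@[simp] theorem zero_nadd_zero : (0 : Ordinal.{u}) ♯ 0 = 0 := by
  apply le_antisymm _ zero_le
  rw [nadd_le_iff]
  exact ⟨fun a' h => absurd h (not_lt_of_ge zero_le), fun b' h => absurd h (not_lt_of_ge zero_le)⟩

end Ordinal

private lemma aux_decomp (σ : Ordinal) (m : ℕ) (r a' : Ordinal) (hr : r < ω ^ σ)
    (h : a' < ω ^ σ * m + r) :
    ∃ (k : ℕ) (r' : Ordinal), a' = ω ^ σ * k + r' ∧ r' < ω ^ σ ∧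
      (k < m ∨ (k = m ∧ r' < r)) := by
  have hω : (ω ^ σ : Ordinal) ≠ 0 := (opow_pos σ omega0_pos).ne'
  have hdm := Ordinal.div_add_mod a' (ω ^ σ)
  have hmod : a' % ω ^ σ < ω ^ σ := Ordinal.mod_lt a' hω
  have hlt : a' < ω ^ σ * (m + 1 : ℕ) := by
    calc a' < ω ^ σ * m + r := h
      _ < ω ^ σ * m + ω ^ σ := add_lt_add_right hr _
      _ = ω ^ σ * (m + 1 : ℕ) := by push_cast; simp [mul_add, Ordinal.mul_succ]
  have hdiv : a' / ω ^ σ < ((m + 1 : ℕ) : Ordinal) := (Ordinal.div_lt hω).2 hlt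
  obtain ⟨k, hk⟩ := Ordinal.lt_omega0.1 (hdiv.trans (Ordinal.nat_lt_omega0 _))
  have hkm : k < m + 1 := by exact_mod_cast hk ▸ hdiv
  have heq : ω ^ σ * (k : Ordinal) + a' % ω ^ σ = a' := by rw [← hk]; exact hdm
  refine ⟨k, a' % ω ^ σ, heq.symm, hmod, ?_⟩
  rcases Nat.lt_succ_iff_lt_or_eq.1 hkm with h' | rfl
  · exact Or.inl h'
  · refine Or.inr ⟨rfl, ?_⟩
    have h2 : ω ^ σ * (k : Ordinal) + a' % ω ^ σ < ω ^ σ * k + r := by rw [heq]; exact h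
    exact lt_of_add_lt_add_left h2

private lemma aux_nadd_le (σ : Ordinal)
    (hG : ∀ x y : Ordinal, x < ω ^ σ → y < ω ^ σ → x ♯ y < ω ^ σ) :
    ∀ a b : Ordinal, ∀ (m n : ℕ) (r s : Ordinal),
      a = ω ^ σ * m + r → b = ω ^ σ * n + s → r < ω ^ σ → s < ω ^ σ →
      a ♯ b ≤ ω ^ σ * (m + n : ℕ) + (r ♯ s) := by
  intro a
  induction a using Ordinal.induction with
  | _ a IHa =>
  intro b
  induction b using Ordinal.induction with
  | _ b IHb =>
  intro m n r s ha hb hr hs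
  rw [nadd_le_iff]
  constructor
  · intro a' ha'
    obtain ⟨k, r', hdec, hr', hcase⟩ := aux_decomp σ m r a' hr (ha ▸ ha')
    rcases hcase with hkm | ⟨rfl, hr'r⟩
    · have h1 : a' ♯ b ≤ ω ^ σ * (k + n : ℕ) + (r' ♯ s) :=
        IHa a' ha' b k n r' s hdec hb hr' hs
      have h2 : ω ^ σ * (k + n : ℕ) + (r' ♯ s) < ω ^ σ * (k + n + 1 : ℕ) := by
        have := add_lt_add_right (hG r' s hr' hs) (ω ^ σ * (k + n : ℕ))
        calc ω ^ σ * (k + n : ℕ) + (r' ♯ s) < ω ^ σ * (k + n : ℕ) + ω ^ σ := this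
          _ = ω ^ σ * (k + n + 1 : ℕ) := by push_cast; simp [mul_add, Ordinal.mul_succ]
      have h3 : ω ^ σ * (k + n + 1 : ℕ) ≤ ω ^ σ * (m + n : ℕ) := by
        apply mul_le_mul_right
        exact_mod_cast Nat.succ_le_of_lt (by omega)
      exact lt_of_le_of_lt h1 (lt_of_lt_of_le h2 (h3.trans le_self_add))
    · have h1 : a' ♯ b ≤ ω ^ σ * (k + n : ℕ) + (r' ♯ s) :=
        IHa a' ha' b k n r' s hdec hb hr' hs
      have h2 : r' ♯ s < r ♯ s := nadd_lt_nadd_right hr'r s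
      exact lt_of_le_of_lt h1 (add_lt_add_right h2 _)
  · intro b' hb'
    obtain ⟨j, s', hdec, hs', hcase⟩ := aux_decomp σ n s b' hs (hb ▸ hb')
    rcases hcase with hjn | ⟨rfl, hs's⟩
    · have h1 : a ♯ b' ≤ ω ^ σ * (m + j : ℕ) + (r ♯ s') :=
        IHb b' hb' m j r s' ha hdec hr hs'
      have h2 : ω ^ σ * (m + j : ℕ) + (r ♯ s') < ω ^ σ * (m + j + 1 : ℕ) := by
        have := add_lt_add_right (hG r s' hr hs') (ω ^ σ * (m + j : ℕ))
        calc ω ^ σ * (m + j : ℕ) + (r ♯ s') < ω ^ σ * (m + j : ℕ) + ω ^ σ := this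
          _ = ω ^ σ * (m + j + 1 : ℕ) := by push_cast; simp [mul_add, Ordinal.mul_succ]
      have h3 : ω ^ σ * (m + j + 1 : ℕ) ≤ ω ^ σ * (m + n : ℕ) := by
        apply mul_le_mul_right
        exact_mod_cast Nat.succ_le_of_lt (by omega)
      exact lt_of_le_of_lt h1 (lt_of_lt_of_le h2 (h3.trans le_self_add))
    · have h1 : a ♯ b' ≤ ω ^ σ * (m + j : ℕ) + (r ♯ s') :=
        IHb b' hb' m j r s' ha hdec hr hs'
      have h2 : r ♯ s' < r ♯ s := nadd_lt_nadd_left hs's r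
      exact lt_of_le_of_lt h1 (add_lt_add_right h2 _)

private lemma aux_principal : ∀ ρ : Ordinal,
    ∀ x y : Ordinal, x < ω ^ ρ → y < ω ^ ρ → x ♯ y < ω ^ ρ := by
  intro ρ
  induction ρ using Ordinal.induction with
  | _ ρ IH =>
  rcases Ordinal.zero_or_succ_or_isSuccLimit ρ with rfl | ⟨σ, rfl⟩ | hlim
  · intro x y hx hy
    rw [opow_zero, Ordinal.lt_one_iff_zero] at hx hy
    subst hx; subst hy; simpa using Ordinal.zero_lt_one
  · intro x y hx hy
    rw [opow_succ] at hx hy ⊢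
    obtain ⟨mx, hmx, hx⟩ := (Ordinal.lt_mul_iff_of_isSuccLimit isSuccLimit_omega0).1 hx
    obtain ⟨my, hmy, hy⟩ := (Ordinal.lt_mul_iff_of_isSuccLimit isSuccLimit_omega0).1 hy
    obtain ⟨m, rfl⟩ := Ordinal.lt_omega0.1 hmx
    obtain ⟨n, rfl⟩ := Ordinal.lt_omega0.1 hmy
    have hG := IH σ (Order.lt_succ σ)
    have hx' : x < ω ^ σ * m + 0 := by simpa using hx
    have hy' : y < ω ^ σ * n + 0 := by simpa using hy
    obtain ⟨k, r, hxd, hr, _⟩ := aux_decomp σ m 0 x (opow_pos σ omega0_pos) hx'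
    obtain ⟨j, s, hyd, hs, _⟩ := aux_decomp σ n 0 y (opow_pos σ omega0_pos) hy'
    have h1 : x ♯ y ≤ ω ^ σ * (k + j : ℕ) + (r ♯ s) :=
      aux_nadd_le σ hG x y k j r s hxd hyd hr hs
    have h2 : ω ^ σ * (k + j : ℕ) + (r ♯ s) < ω ^ σ * (k + j + 1 : ℕ) := by
      calc ω ^ σ * (k + j : ℕ) + (r ♯ s) < ω ^ σ * (k + j : ℕ) + ω ^ σ :=
            add_lt_add_right (hG r s hr hs) _
        _ = ω ^ σ * (k + j + 1 : ℕ) := by push_cast; simp [mul_add, Ordinal.mul_succ]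
    have h3 : ω ^ σ * (k + j + 1 : ℕ) < ω ^ σ * ω :=
      mul_lt_mul_of_pos_left (Ordinal.nat_lt_omega0 _) (opow_pos σ omega0_pos)
    exact lt_of_le_of_lt h1 (h2.trans h3)
  · intro x y hx hy
    have key : ∀ z : Ordinal, z < ω ^ ρ → ∃ σ < ρ, z < ω ^ σ := by
      intro z hz
      rcases eq_or_ne z 0 with rfl | hz0
      · exact ⟨0, hlim.pos, by simpa using Ordinal.zero_lt_one⟩
      · refine ⟨log ω z + 1, hlim.succ_lt ((Ordinal.lt_opow_iff_log_lt one_lt_omega0 hz0).1 hz), ?_⟩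
        exact Ordinal.lt_opow_succ_log_self one_lt_omega0 z
    obtain ⟨σx, hσx, hx'⟩ := key x hx
    obtain ⟨σy, hσy, hy'⟩ := key y hy
    set σ := max σx σy with hσ
    have hσρ : σ < ρ := max_lt hσx hσy
    have h1 : x < ω ^ σ := hx'.trans_le (Ordinal.opow_le_opow_right omega0_pos (le_max_left _ _))
    have h2 : y < ω ^ σ := hy'.trans_le (Ordinal.opow_le_opow_right omega0_pos (le_max_right _ _))
    exact (IH σ hσρ x y h1 h2).trans_le
      (Ordinal.opow_le_opow_right omega0_pos hσρ.le)

private lemma aux_key (ρ : Ordinal) (m n : ℕ) :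
    ω ^ ρ * m ♯ ω ^ ρ * n ≤ ω ^ ρ * ((m + n : ℕ) : Ordinal) := by
  have := aux_nadd_le ρ (aux_principal ρ) (ω ^ ρ * m) (ω ^ ρ * n) m n 0 0
    (by rw [add_zero]) (by rw [add_zero]) (opow_pos ρ omega0_pos) (opow_pos ρ omega0_pos)
  simpa using this

/-- Sequences `x, y : ℕ → X` are `ρ`-limitedly distant if there exists `μ ∈ ℕ` with
`{n : d (x n) (y n) ≤ ω^ρ · μ} ∈ F`. -/
def LimitedlyDistant {X : Type*} (d : X → X → Ordinal) (F : Ultrafilter ℕ)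
    (ρ : Ordinal) (x y : ℕ → X) : Prop :=
  ∃ μ : ℕ, {n : ℕ | d (x n) (y n) ≤ ω ^ ρ * μ} ∈ F

theorem not_limitedlyDistant_of_unbounded
    (X : Type*) (d : X → X → Ordinal)
    (hd0 : ∀ a b : X, d a b = 0 ↔ a = b)
    (hdsymm : ∀ a b : X, d a b = d b a)
    (hdtri : ∀ a b c : X, d a c ≤ d a b ♯ d b c)
    (F : Ultrafilter ℕ) (hF : ∀ s : Set ℕ, sᶜ.Finite → s ∈ F)
    (ρ : Ordinal) (a : X) (y : ℕ → X)
    (hy : ∀ k : ℕ, ω ^ ρ * k ≤ d (y k) a) :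
    ∀ b : X, (∃ μ₀ : ℕ, d a b ≤ ω ^ ρ * μ₀) →
      ¬ LimitedlyDistant d F ρ y (fun _ => b) := by
  rintro b ⟨μ₀, hb⟩ ⟨μ, hS⟩
  have hT : {n : ℕ | μ + μ₀ < n} ∈ F := by
    apply hF
    apply (Set.finite_Iic (μ + μ₀)).subset
    intro n hn
    simpa using Set.notMem_of_mem_compl hn |> fun h => Nat.le_of_not_lt (by simpa using hn)
  obtain ⟨n, hnS, hnT⟩ := Ultrafilter.nonempty_of_mem (inter_mem hS hT)
  have h1 : ω ^ ρ * n ≤ d (y n) a := hy n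
  have h2 : d (y n) a ≤ d (y n) b ♯ d b a := hdtri _ _ _
  have h3 : d (y n) b ♯ d b a ≤ ω ^ ρ * μ ♯ ω ^ ρ * μ₀ := by
    apply (nadd_le_nadd_right hnS _).trans
    apply nadd_le_nadd_left
    rw [← hdsymm a b]; exact hb
  have h4 := aux_key ρ μ μ₀
  have h5 : ω ^ ρ * ((μ + μ₀ : ℕ) : Ordinal) < ω ^ ρ * n :=
    mul_lt_mul_of_pos_left (by exact_mod_cast hnT) (opow_pos ρ omega0_pos)
  exact absurd (h1.trans (h2.trans (h3.trans h4))) (not_le_of_gt h5)
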